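/- (Voronoi congruence, multiplicative form) Let p ≥ 5 be a prime, g a primitive root modulo p, and k an even integer with 2 ≤ k < p-1 such that g^k ≢ 1 (mod p). Define h(x) = ((x mod p) - g·((x·g^{-1}) mod p))/p + (g-1)/2 for x coprime to p, where (y mod p) denotes the least nonnegative residue. Then B_k ≡ (2k/(1 - g^k)) · ∑_{i=0}^{(p-3)/2} g^{(k-1)i} h(g^i) (mod p). -/

import Mathlib

open Finset

namespace Voronoi

variable {p : ℕ} [hp : Fact p.Prime]

/-- `q` is `p`-integral. -/
def PI (p : ℕ) (q : ℚ) : Prop := ¬ p ∣ q.den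

lemma pi_intCast (n : ℤ) : PI p (n : ℚ) := by
  simp only [PI, Rat.den_intCast]
  exact hp.out.not_dvd_one

lemma pi_natCast (n : ℕ) : PI p (n : ℚ) := by
  simpa using pi_intCast (p := p) (n : ℤ)

lemma pi_add {q r : ℚ} (hq : PI p q) (hr : PI p r) : PI p (q + r) := by
  intro h
  rcases (hp.out.dvd_mul.mp (h.trans (Rat.add_den_dvd q r))) with h' | h'
  exacts [hq h', hr h']

lemma pi_mul {q r : ℚ} (hq : PI p q) (hr : PI p r) : PI p (q * r) := by
  intro h
  rcases (hp.out.dvd_mul.mp (h.trans (Rat.mul_den_dvd q r))) with h' | h'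
  exacts [hq h', hr h']

lemma pi_sum {ι : Type*} (s : Finset ι) (f : ι → ℚ) (h : ∀ i ∈ s, PI p (f i)) :
    PI p (∑ i ∈ s, f i) := by
  induction s using Finset.cons_induction with
  | empty => simpa using pi_intCast (p := p) 0
  | cons a s ha ih =>
    rw [Finset.sum_cons]
    exact pi_add (h a (Finset.mem_cons_self a s)) (ih fun i hi => h i (Finset.mem_cons.mpr (Or.inr hi)))

lemma cast_den_ne {q : ℚ} (hq : PI p q) : ((q.den : ℕ) : ZMod p) ≠ 0 := by
  rw [Ne, ZMod.natCast_eq_zero_iff]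
  exact hq

/-- main computation lemma for rational casts of fractions -/
lemma castAB (a b : ℤ) (hb : ¬ (p : ℤ) ∣ b) :
    (((a : ℚ) / (b : ℚ) : ℚ) : ZMod p) = (a : ZMod p) / (b : ZMod p) := by
  have hb0 : b ≠ 0 := by rintro rfl; exact hb (dvd_zero _)
  set q : ℚ := (a : ℚ) / (b : ℚ) with hq
  have hden : (q.den : ℤ) ∣ b := by
    rw [hq, ← Rat.divInt_eq_div]; exact Rat.den_dvd a b
  have hd0 : ((q.den : ℚ)) ≠ 0 := by exact_mod_cast q.den_nz
  have hnum : q.num * b = a * (q.den : ℤ) := by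
    have h1 : (q.num : ℚ) / (q.den : ℚ) = (a : ℚ) / (b : ℚ) := by rw [Rat.num_div_den]
    rw [div_eq_div_iff hd0 (by exact_mod_cast hb0)] at h1
    exact_mod_cast h1
  have hdenp : ((q.den : ℕ) : ZMod p) ≠ 0 := by
    rw [Ne, ZMod.natCast_eq_zero_iff]
    intro h
    exact hb ((Int.natCast_dvd_natCast.mpr h).trans hden)
  have hbp : ((b : ZMod p)) ≠ 0 := by
    rw [Ne, ZMod.intCast_zmod_eq_zero_iff_dvd]; exact hb
  rw [Rat.cast_def, div_eq_div_iff hdenp hbp]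
  have := congrArg (fun z : ℤ => (z : ZMod p)) hnum
  push_cast at this ⊢
  exact this

lemma cast_pi (q : ℚ) : ((q : ℚ) : ZMod p) = (q.num : ZMod p) / (q.den : ZMod p) :=
  Rat.cast_def q

lemma num_eq (q : ℚ) : (q.num : ℚ) = q * (q.den : ℚ) := by
  have hd0 : ((q.den : ℚ)) ≠ 0 := by exact_mod_cast q.den_nz
  have h := Rat.num_div_den q
  rw [div_eq_iff hd0] at h
  exact h

lemma cast_add' {q r : ℚ} (hq : PI p q) (hr : PI p r) :
    ((q + r : ℚ) : ZMod p) = (q : ZMod p) + (r : ZMod p) := by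
  have hq0 : ((q.den : ℚ)) ≠ 0 := by exact_mod_cast q.den_nz
  have hr0 : ((r.den : ℚ)) ≠ 0 := by exact_mod_cast r.den_nz
  have key : (q + r : ℚ)
      = ((q.num * r.den + r.num * q.den : ℤ) : ℚ) / ((q.den * r.den : ℤ) : ℚ) := by
    rw [eq_div_iff (by push_cast; positivity)]
    push_cast
    have e1 := num_eq q
    have e2 := num_eq r
    linear_combination (-(r.den : ℚ)) * e1 + (-(q.den : ℚ)) * e2
  rw [key, castAB]
  · rw [cast_pi, cast_pi]
    have h1 := cast_den_ne (p := p) hq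
    have h2 := cast_den_ne (p := p) hr
    field_simp
    push_cast
    ring
  · intro h
    rcases (Int.Prime.dvd_mul' (by exact_mod_cast hp.out) h) with h' | h'
    · exact hq (by exact_mod_cast h')
    · exact hr (by exact_mod_cast h')

lemma cast_mul' {q r : ℚ} (hq : PI p q) (hr : PI p r) :
    ((q * r : ℚ) : ZMod p) = (q : ZMod p) * (r : ZMod p) := by
  have hq0 : ((q.den : ℚ)) ≠ 0 := by exact_mod_cast q.den_nz
  have hr0 : ((r.den : ℚ)) ≠ 0 := by exact_mod_cast r.den_nz
  have key : (q * r : ℚ) = ((q.num * r.num : ℤ) : ℚ) / ((q.den * r.den : ℤ) : ℚ) := by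
    rw [eq_div_iff (by push_cast; positivity)]
    push_cast
    have e1 := num_eq q
    have e2 := num_eq r
    linear_combination (-(q.num : ℚ)) * e2 + (-(r * (r.den : ℚ))) * e1
  rw [key, castAB]
  · rw [cast_pi, cast_pi]
    have h1 := cast_den_ne (p := p) hq
    have h2 := cast_den_ne (p := p) hr
    field_simp
    push_cast
    ring
  · intro h
    rcases (Int.Prime.dvd_mul' (by exact_mod_cast hp.out) h) with h' | h'
    · exact hq (by exact_mod_cast h')
    · exact hr (by exact_mod_cast h')

lemma cast_sum' {ι : Type*} (s : Finset ι) (f : ι → ℚ) (h : ∀ i ∈ s, PI p (f i)) :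
    ((∑ i ∈ s, f i : ℚ) : ZMod p) = ∑ i ∈ s, ((f i : ℚ) : ZMod p) := by
  induction s using Finset.cons_induction with
  | empty => simp
  | cons a s ha ih =>
    rw [Finset.sum_cons, Finset.sum_cons,
      cast_add' (h a (Finset.mem_cons_self a s))
        (pi_sum s f fun i hi => h i (Finset.mem_cons.mpr (Or.inr hi))),
      ih fun i hi => h i (Finset.mem_cons.mpr (Or.inr hi))]

lemma pi_AB (a b : ℤ) (hb : ¬ (p : ℤ) ∣ b) : PI p ((a : ℚ) / (b : ℚ)) := by
  intro h
  have hden : ((((a : ℚ) / (b : ℚ)).den : ℤ)) ∣ b := by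
    rw [← Rat.divInt_eq_div]; exact Rat.den_dvd a b
  exact hb ((Int.natCast_dvd_natCast.mpr h).trans hden)

lemma pi_neg {q : ℚ} (hq : PI p q) : PI p (-q) := by
  simpa [PI, Rat.neg_den] using hq

lemma cast_sub' {q r : ℚ} (hq : PI p q) (hr : PI p r) :
    ((q - r : ℚ) : ZMod p) = (q : ZMod p) - (r : ZMod p) := by
  rw [sub_eq_add_neg, cast_add' hq (pi_neg hr), Rat.cast_neg, sub_eq_add_neg]

lemma not_dvd_small {m : ℕ} (hm : m ≠ 0) (hmp : m < p) : ¬ (p : ℤ) ∣ (m : ℤ) := by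
  rw [Int.natCast_dvd_natCast]
  intro h
  exact absurd (Nat.le_of_dvd (Nat.pos_of_ne_zero hm) h) (not_le.mpr hmp)

lemma sum_zmod {M : Type*} [AddCommMonoid M] (F : ZMod p → M) :
    ∑ a ∈ range p, F ((a : ℕ) : ZMod p) = ∑ x : ZMod p, F x := by
  apply Finset.sum_nbij' (i := fun a => ((a : ℕ) : ZMod p)) (j := fun x => x.val)
  · intro a _; exact Finset.mem_univ _
  · intro x _
    exact Finset.mem_range.mpr (ZMod.val_lt x)
  · intro a ha
    exact ZMod.val_cast_of_lt (Finset.mem_range.mp ha)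
  · intro x _
    simp [ZMod.natCast_val, ZMod.cast_id]
  · intro a _; rfl

lemma p_dvd_S (j : ℕ) (hj0 : j ≠ 0) (hj : j < p - 1) :
    (p : ℤ) ∣ ∑ a ∈ range p, (a : ℤ) ^ j := by
  rw [← ZMod.intCast_zmod_eq_zero_iff_dvd]
  push_cast
  rw [sum_zmod (F := fun x : ZMod p => x ^ j)]
  apply FiniteField.sum_pow_lt_card_sub_one
  rwa [ZMod.card]

lemma bernoulli_key (j : ℕ) (hj : 1 ≤ j) :
    bernoulli j * (p : ℚ) = (∑ a ∈ range p, (a : ℚ) ^ j)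
      - ∑ i ∈ range j, bernoulli i * ((j + 1).choose i) * (p : ℚ) ^ (j + 1 - i) / (j + 1) := by
  have h := sum_range_pow p j
  rw [Finset.sum_range_succ] at h
  have hc : ((j + 1).choose j : ℚ) = (j : ℚ) + 1 := by
    rw [Nat.choose_succ_self_right]; push_cast; ring
  have hj1 : ((j : ℚ) + 1) ≠ 0 := by positivity
  have hlast : bernoulli j * ((j + 1).choose j) * (p : ℚ) ^ (j + 1 - j) / (j + 1)
      = bernoulli j * (p : ℚ) := by
    rw [hc]
    have : j + 1 - j = 1 := by omega
    rw [this]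
    field_simp
  rw [hlast] at h
  linarith [h]

lemma bernoulli_sub_eq (j : ℕ) (hj1 : 1 ≤ j) (hjlt : j < p - 1) (m : ℤ)
    (hm : ∑ a ∈ range p, (a : ℤ) ^ j = (p : ℤ) * m) :
    bernoulli j = (m : ℚ)
      - ∑ i ∈ range j, bernoulli i * (((j + 1).choose i * p ^ (j - i) : ℤ) : ℚ)
            / (((j + 1 : ℕ) : ℤ) : ℚ) := by
  have hSq : (∑ a ∈ range p, (a : ℚ) ^ j) = (p : ℚ) * (m : ℚ) := by
    have : ((∑ a ∈ range p, (a : ℤ) ^ j : ℤ) : ℚ) = (((p : ℤ) * m : ℤ) : ℚ) := by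
      exact_mod_cast congrArg (fun z : ℤ => (z : ℚ)) hm
    push_cast at this
    convert this using 2
  have hp0 : (p : ℚ) ≠ 0 := Nat.cast_ne_zero.mpr hp.out.pos.ne'
  have key := bernoulli_key (p := p) j hj1
  have hterm : ∀ i ∈ range j,
      bernoulli i * ((j + 1).choose i) * (p : ℚ) ^ (j + 1 - i) / (j + 1)
      = (p : ℚ) * (bernoulli i * (((j + 1).choose i * p ^ (j - i) : ℤ) : ℚ)
          / (((j + 1 : ℕ) : ℤ) : ℚ)) := by
    intro i hi
    have hi' : i < j := Finset.mem_range.mp hi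
    have he : j + 1 - i = (j - i) + 1 := by omega
    rw [he]
    push_cast
    field_simp
    ring
  rw [Finset.sum_congr rfl hterm, ← Finset.mul_sum, hSq] at key
  apply mul_right_cancel₀ hp0
  rw [key]
  ring

/-- All Bernoulli numbers up to `p - 3` are `p`-integral. -/
lemma bernoulli_pi (j : ℕ) (hj : j ≤ p - 3) (hp5 : 5 ≤ p) : PI p (bernoulli j) := by
  induction j using Nat.strong_induction_on with
  | _ j ih =>
    rcases Nat.eq_zero_or_pos j with rfl | hj1
    · simpa [bernoulli_zero] using pi_intCast (p := p) 1
    have hjlt : j < p - 1 := by omega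
    obtain ⟨m, hm⟩ := p_dvd_S (p := p) j (by omega) hjlt
    rw [bernoulli_sub_eq j hj1 hjlt m hm, sub_eq_add_neg]
    have hjp : ¬ (p : ℤ) ∣ ((j + 1 : ℕ) : ℤ) := not_dvd_small (by omega) (by omega)
    apply pi_add (pi_intCast m)
    apply pi_neg
    apply pi_sum
    intro i hi
    have hi' : i < j := Finset.mem_range.mp hi
    rw [mul_div_assoc]
    exact pi_mul (ih i hi' (by omega)) (pi_AB _ _ hjp)

lemma bernoulli_cast (k : ℕ) (hk1 : 1 ≤ k) (hk : k ≤ p - 3) (hp5 : 5 ≤ p) (m : ℤ)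
    (hm : ∑ a ∈ range p, (a : ℤ) ^ k = (p : ℤ) * m) :
    ((bernoulli k : ℚ) : ZMod p) = (m : ZMod p) := by
  rw [bernoulli_sub_eq k hk1 (by omega) m hm]
  have hjp : ¬ (p : ℤ) ∣ ((k + 1 : ℕ) : ℤ) := not_dvd_small (by omega) (by omega)
  have hPIterm : ∀ i ∈ range k,
      PI p (bernoulli i * (((k + 1).choose i * p ^ (k - i) : ℤ) : ℚ)
        / (((k + 1 : ℕ) : ℤ) : ℚ)) := by
    intro i hi
    have hi' : i < k := Finset.mem_range.mp hi
    rw [mul_div_assoc]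
    exact pi_mul (bernoulli_pi i (by omega) hp5) (pi_AB _ _ hjp)
  rw [cast_sub' (pi_intCast m) (pi_sum _ _ hPIterm), Rat.cast_intCast,
    cast_sum' _ _ hPIterm]
  have hz : ∀ i ∈ range k,
      ((bernoulli i * (((k + 1).choose i * p ^ (k - i) : ℤ) : ℚ)
        / (((k + 1 : ℕ) : ℤ) : ℚ) : ℚ) : ZMod p) = 0 := by
    intro i hi
    have hi' : i < k := Finset.mem_range.mp hi
    rw [mul_div_assoc, cast_mul' (bernoulli_pi i (by omega) hp5) (pi_AB _ _ hjp),
      castAB _ _ hjp]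
    have hnum : ((((k + 1).choose i * p ^ (k - i) : ℤ)) : ZMod p) = 0 := by
      push_cast
      rw [ZMod.natCast_self, zero_pow (by omega : k - i ≠ 0), mul_zero]
    rw [hnum, zero_div, mul_zero]
  rw [Finset.sum_eq_zero hz, sub_zero]

end Voronoi

namespace Voronoi

lemma sq_dvd_aux (x y : ℤ) (k : ℕ) :
    (y ^ 2 : ℤ) ∣ (x - y) ^ (k + 1) - x ^ (k + 1) + ((k : ℤ) + 1) * x ^ k * y := by
  induction k with
  | zero => exact ⟨0, by ring⟩
  | succ k ih =>
    obtain ⟨c, hc⟩ := ih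
    refine ⟨(x - y) * c + ((k : ℤ) + 1) * x ^ k, ?_⟩
    have hexp : (x - y) ^ (k + 1 + 1) = (x - y) * (x - y) ^ (k + 1) := by ring
    push_cast
    linear_combination (x - y) * hc

lemma sq_dvd (x y : ℤ) (k : ℕ) (hk : k ≠ 0) :
    (y ^ 2 : ℤ) ∣ (x - y) ^ k - x ^ k + (k : ℤ) * x ^ (k - 1) * y := by
  obtain ⟨l, rfl⟩ : ∃ l, k = l + 1 := ⟨k - 1, by omega⟩
  have := sq_dvd_aux x y l
  simpa [Nat.add_sub_cancel] using (by push_cast at this ⊢; convert this using 2 <;> push_cast <;> ring : (y ^ 2 : ℤ) ∣ (x - y) ^ (l + 1) - x ^ (l + 1) + ((l + 1 : ℕ) : ℤ) * x ^ (l + 1 - 1) * y)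

end Voronoi

open Finset Voronoi


/-- Voronoi congruence, multiplicative form.  Let `p ≥ 5` be prime, `g` a primitive
root mod `p` (with integer inverse `ginv` mod `p`), and `k` even with `2 ≤ k < p-1`
and `g^k ≢ 1 (mod p)`.  With
`h(x) = ((x mod p) - g·((x·g⁻¹) mod p))/p + (g-1)/2` (a `p`-integral rational),
we have `B_k ≡ (2k/(1 - g^k)) · ∑_{i=0}^{(p-3)/2} g^{(k-1)i} h(g^i) (mod p)`. -/
theorem voronoi_multiplicative (p g ginv k : ℕ) [Fact p.Prime] (hp5 : 5 ≤ p)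
    (hg : IsPrimitiveRoot (g : ZMod p) (p - 1))
    (hginv : ((g * ginv : ℕ) : ZMod p) = 1)
    (hke : Even k) (hk2 : 2 ≤ k) (hklt : k < p - 1)
    (hgk : (g : ZMod p) ^ k ≠ 1) :
    ((bernoulli' k : ℚ) : ZMod p)
      = (2 * k) / (1 - (g : ZMod p) ^ k) *
          ∑ i ∈ Finset.range ((p - 3) / 2 + 1),
            (g : ZMod p) ^ ((k - 1) * i) *
              ((((((g ^ i % p : ℕ) : ℚ) - g * ((g ^ i * ginv % p : ℕ) : ℚ)) / p
                  + ((g : ℚ) - 1) / 2 : ℚ) : ZMod p)) := by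
  have hp : Fact p.Prime := inferInstance
  have hpodd : p % 2 = 1 := Nat.odd_iff.mp (hp.out.odd_of_ne_two (by omega))
  obtain ⟨t, ht⟩ := hke
  have hk3 : k ≤ p - 3 := by omega
  have hp0 : (0:ℕ) < p := by omega
  have hγinv : (g : ZMod p) * (ginv : ZMod p) = 1 := by push_cast at hginv; exact hginv
  have hγ0 : (g : ZMod p) ≠ 0 := by
    intro h; rw [h, zero_mul] at hγinv; exact zero_ne_one hγinv
  have hγinv0 : (ginv : ZMod p) ≠ 0 := by
    intro h; rw [h, mul_zero] at hγinv; exact zero_ne_one hγinv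
  have hmodeq : g * ginv ≡ 1 [MOD p] := by
    rw [← ZMod.natCast_eq_natCast_iff]; push_cast; exact hγinv
  set M : ℕ := (p - 3) / 2 with hM
  have hM1 : M + 1 = (p - 1) / 2 := by omega
  set Q : ℕ → ℕ := fun a => g * a / p with hQ
  set b : ℕ → ℕ := fun i => g ^ i * ginv % p with hb
  -- the division identity behind h(g^i)
  have hgb : ∀ i : ℕ, g * b i = p * Q (b i) + g ^ i % p := by
    intro i
    have hme : g * b i ≡ g ^ i [MOD p] := by
      calc g * b i ≡ g * (g ^ i * ginv) [MOD p] := Nat.ModEq.mul_left g (Nat.mod_modEq _ p)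
        _ = g * ginv * g ^ i := by ring
        _ ≡ 1 * g ^ i [MOD p] := Nat.ModEq.mul_right _ hmodeq
        _ = g ^ i := one_mul _
    have hme' : g * b i % p = g ^ i % p := hme
    have hQbi : Q (b i) = g * b i / p := by simp only [hQ]
    rw [hQbi, ← hme']
    exact (Nat.div_add_mod (g * b i) p).symm
  -- cast of the h-value
  have hcast_h : ∀ i : ℕ,
      (((((g ^ i % p : ℕ) : ℚ) - g * ((g ^ i * ginv % p : ℕ) : ℚ)) / p
          + ((g : ℚ) - 1) / 2 : ℚ) : ZMod p)
        = (((g : ℤ) - 1 - 2 * Q (b i) : ℤ) : ZMod p) / (((2 : ℤ)) : ZMod p) := by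
    intro i
    have hp0' : (p : ℚ) ≠ 0 := Nat.cast_ne_zero.mpr (by omega)
    have hidQ : (g : ℚ) * ((g ^ i * ginv % p : ℕ) : ℚ)
        = (p : ℚ) * ((Q (b i) : ℕ) : ℚ) + ((g ^ i % p : ℕ) : ℚ) := by
      have := congrArg (fun n : ℕ => (n : ℚ)) (hgb i)
      push_cast at this
      simpa [hb] using this
    have hrat : ((((g ^ i % p : ℕ) : ℚ) - g * ((g ^ i * ginv % p : ℕ) : ℚ)) / p
          + ((g : ℚ) - 1) / 2 : ℚ)
        = (((g : ℤ) - 1 - 2 * Q (b i) : ℤ) : ℚ) / (((2 : ℤ)) : ℚ) := by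
      field_simp
      push_cast
      linarith [hidQ]
    rw [hrat, castAB]
    intro hdvd
    have h2 : (p : ℤ) ≤ 2 := Int.le_of_dvd (by norm_num) hdvd
    omega
  -- S and T
  set S : ℤ := ∑ a ∈ range p, (a : ℤ) ^ k with hS
  set T : ℤ := ∑ a ∈ range p, (a : ℤ) ^ (k - 1) * (Q a : ℤ) with hT
  obtain ⟨mS, hmS⟩ := p_dvd_S (p := p) k (by omega) (by omega)
  -- Voronoi's integer congruence
  have hzmod : ((1 : ZMod p) - (g : ZMod p) ^ k) * (mS : ZMod p)
      + (k : ZMod p) * (g : ZMod p) ^ (k - 1) * (T : ZMod p) = 0 := by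
    have hpz : (p : ℤ) ≠ 0 := by exact_mod_cast (by omega : p ≠ 0)
    -- the per-term congruence
    have hterm : ∀ a ∈ range p, (p : ℤ) ^ 2 ∣
        (((g * a % p : ℕ) : ℤ) ^ k - ((g : ℤ) * a) ^ k
          + (k : ℤ) * ((g : ℤ) * a) ^ (k - 1) * ((p : ℤ) * (Q a : ℤ))) := by
      intro a _
      have hsub : (g : ℤ) * a - (p : ℤ) * (Q a : ℤ) = ((g * a % p : ℕ) : ℤ) := by
        have h1' : p * Q a + g * a % p = g * a := by
          simp only [hQ]; exact Nat.div_add_mod (g * a) p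
        have h4 : (p : ℤ) * (Q a : ℤ) + ((g * a % p : ℕ) : ℤ) = (g : ℤ) * (a : ℤ) := by
          exact_mod_cast congrArg (fun n : ℕ => (n : ℤ)) h1'
        linarith [h4]
      have hdvd := sq_dvd ((g : ℤ) * a) ((p : ℤ) * (Q a : ℤ)) k (by omega)
      rw [hsub] at hdvd
      refine dvd_trans ⟨(Q a : ℤ) ^ 2, by ring⟩ hdvd
    have hdvdsum := Finset.dvd_sum hterm
    -- reindex the first part of the sum
    have hSperm : ∑ a ∈ range p, ((g * a % p : ℕ) : ℤ) ^ k = S := by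
      rw [hS]
      apply Finset.sum_nbij' (i := fun a => g * a % p) (j := fun c => ginv * c % p)
      · intro a _; exact Finset.mem_range.mpr (Nat.mod_lt _ hp0)
      · intro c _; exact Finset.mem_range.mpr (Nat.mod_lt _ hp0)
      · intro a ha
        have hme : ginv * (g * a % p) ≡ a [MOD p] := by
          calc ginv * (g * a % p) ≡ ginv * (g * a) [MOD p] :=
                Nat.ModEq.mul_left ginv (Nat.mod_modEq _ p)
            _ = g * ginv * a := by ring
            _ ≡ 1 * a [MOD p] := Nat.ModEq.mul_right _ hmodeq
            _ = a := one_mul _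
        have hme' : ginv * (g * a % p) % p = a % p := hme
        rw [hme', Nat.mod_eq_of_lt (Finset.mem_range.mp ha)]
      · intro c hc
        have hme : g * (ginv * c % p) ≡ c [MOD p] := by
          calc g * (ginv * c % p) ≡ g * (ginv * c) [MOD p] :=
                Nat.ModEq.mul_left g (Nat.mod_modEq _ p)
            _ = g * ginv * c := by ring
            _ ≡ 1 * c [MOD p] := Nat.ModEq.mul_right _ hmodeq
            _ = c := one_mul _
        have hme' : g * (ginv * c % p) % p = c % p := hme
        rw [hme', Nat.mod_eq_of_lt (Finset.mem_range.mp hc)]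
      · intro a _; rfl
    have hsplit : ∑ a ∈ range p,
        (((g * a % p : ℕ) : ℤ) ^ k - ((g : ℤ) * a) ^ k
          + (k : ℤ) * ((g : ℤ) * a) ^ (k - 1) * ((p : ℤ) * (Q a : ℤ)))
        = S - (g : ℤ) ^ k * S + (k : ℤ) * (g : ℤ) ^ (k - 1) * (p : ℤ) * T := by
      rw [Finset.sum_add_distrib, Finset.sum_sub_distrib, hSperm]
      have h1 : ∑ a ∈ range p, ((g : ℤ) * a) ^ k = (g : ℤ) ^ k * S := by
        rw [hS, Finset.mul_sum]
        exact Finset.sum_congr rfl fun a _ => by rw [mul_pow]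
      have h2 : ∑ a ∈ range p, (k : ℤ) * ((g : ℤ) * a) ^ (k - 1) * ((p : ℤ) * (Q a : ℤ))
          = (k : ℤ) * (g : ℤ) ^ (k - 1) * (p : ℤ) * T := by
        rw [hT, Finset.mul_sum]
        exact Finset.sum_congr rfl fun a _ => by rw [mul_pow]; ring
      rw [h1, h2]
    rw [hsplit] at hdvdsum
    have hfac : S - (g : ℤ) ^ k * S + (k : ℤ) * (g : ℤ) ^ (k - 1) * (p : ℤ) * T
        = (p : ℤ) * ((mS : ℤ) - (g : ℤ) ^ k * mS + (k : ℤ) * (g : ℤ) ^ (k - 1) * T) := by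
      rw [hS, hmS]; ring
    rw [hfac, pow_two] at hdvdsum
    have hdvd1 : (p : ℤ) ∣ ((mS : ℤ) - (g : ℤ) ^ k * mS + (k : ℤ) * (g : ℤ) ^ (k - 1) * T) :=
      (mul_dvd_mul_iff_left hpz).mp hdvdsum
    have := (ZMod.intCast_zmod_eq_zero_iff_dvd _ p).mpr hdvd1
    push_cast at this
    linear_combination this
  -- Bernoulli number reduction
  have hbern : ((bernoulli' k : ℚ) : ZMod p) = (mS : ZMod p) := by
    rw [← bernoulli_eq_bernoulli'_of_ne_one (by omega)]
    exact bernoulli_cast k (by omega) hk3 hp5 mS hmS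
  -- the pairing identity
  set V : ZMod p := ∑ i ∈ range (M + 1),
      (g : ZMod p) ^ ((k - 1) * i) * ((g : ZMod p) - 1 - 2 * (Q (b i) : ZMod p)) with hV
  have hpair : (g : ZMod p) ^ (k - 1) * (T : ZMod p) = -V := by
    have hbcast : ∀ i : ℕ, ((b i : ℕ) : ZMod p) = (g : ZMod p) ^ i * (ginv : ZMod p) := by
      intro i
      show ((g ^ i * ginv % p : ℕ) : ZMod p) = _
      rw [ZMod.natCast_mod]
      push_cast
      ring
    have hblt : ∀ i : ℕ, b i < p := fun i => Nat.mod_lt _ hp0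
    have hbne : ∀ i : ℕ, b i ≠ 0 := by
      intro i h
      have h1 : ((b i : ℕ) : ZMod p) = 0 := by rw [h]; exact Nat.cast_zero
      rw [hbcast i] at h1
      exact mul_ne_zero (pow_ne_zero _ hγ0) hγinv0 h1
    have hneg : (g : ZMod p) ^ ((p - 1) / 2) = -1 := by
      have hsq : ((g : ZMod p) ^ ((p - 1) / 2)) ^ 2 = 1 := by
        rw [← pow_mul]
        have he : (p - 1) / 2 * 2 = p - 1 := by omega
        rw [he]
        exact hg.pow_eq_one
      have hfac : ((g : ZMod p) ^ ((p - 1) / 2) - 1) * ((g : ZMod p) ^ ((p - 1) / 2) + 1) = 0 := by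
        linear_combination hsq
      rcases mul_eq_zero.mp hfac with h | h
      · exfalso
        have h1 : (g : ZMod p) ^ ((p - 1) / 2) = 1 := by linear_combination h
        have h2 := (hg.pow_eq_one_iff_dvd _).mp h1
        have h3 := Nat.le_of_dvd (by omega) h2
        omega
      · linear_combination h
    have hQpair : ∀ a : ℕ, 1 ≤ a → a < p → Q a + Q (p - a) + 1 = g := by
      intro a ha1 hap
      have haz : ((a : ℕ) : ZMod p) ≠ 0 := by
        intro h
        have h1 := (ZMod.natCast_eq_zero_iff a p).mp h
        have := Nat.le_of_dvd (by omega) h1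
        omega
      have hr0 : g * a % p ≠ 0 := by
        intro h
        have h1 : ((g * a : ℕ) : ZMod p) = 0 := by rw [← ZMod.natCast_mod, h]; exact Nat.cast_zero
        push_cast at h1
        rcases mul_eq_zero.mp h1 with h' | h'
        exacts [hγ0 h', haz h']
      have hrlt : g * a % p < p := Nat.mod_lt _ hp0
      have hr' : g * (p - a) % p = p - g * a % p := by
        have hcast1 : ((g * (p - a) % p : ℕ) : ZMod p) = ((p - g * a % p : ℕ) : ZMod p) := by
          rw [ZMod.natCast_mod, Nat.cast_mul, Nat.cast_sub hap.le, Nat.cast_sub hrlt.le,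
            ZMod.natCast_mod, ZMod.natCast_self]
          push_cast
          ring
        have hlt1 : g * (p - a) % p < p := Nat.mod_lt _ hp0
        have hlt2 : p - g * a % p < p := by omega
        have := congrArg ZMod.val hcast1
        rwa [ZMod.val_cast_of_lt hlt1, ZMod.val_cast_of_lt hlt2] at this
      have E1 : p * Q a + g * a % p = g * a := by
        simp only [hQ]; exact Nat.div_add_mod (g * a) p
      have E2 : p * Q (p - a) + g * (p - a) % p = g * (p - a) := by
        simp only [hQ]; exact Nat.div_add_mod (g * (p - a)) p
      rw [hr'] at E2
      have E3 : g * (p - a) + g * a = g * p := by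
        rw [← Nat.mul_add, Nat.sub_add_cancel hap.le]
      have E1' : (p : ℤ) * (Q a : ℤ) + ((g * a % p : ℕ) : ℤ) = (g : ℤ) * (a : ℤ) := by
        exact_mod_cast congrArg (fun n : ℕ => (n : ℤ)) E1
      have E2' : (p : ℤ) * (Q (p - a) : ℤ) + ((p : ℤ) - ((g * a % p : ℕ) : ℤ))
          = (g : ℤ) * ((p : ℤ) - (a : ℤ)) := by
        have := congrArg (fun n : ℕ => (n : ℤ)) E2
        push_cast [Nat.cast_sub hrlt.le, Nat.cast_sub hap.le] at this
        linarith [this]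
      have E4 : (p : ℤ) * ((Q a : ℤ) + (Q (p - a) : ℤ) + 1) = (p : ℤ) * (g : ℤ) := by ring_nf; ring_nf at E1' E2'; linarith [E1', E2']
      have E5 := mul_left_cancel₀ (by exact_mod_cast (by omega : p ≠ 0) : (p : ℤ) ≠ 0) E4
      exact_mod_cast E5
    -- the half set
    set A : Finset ℕ := (range (M + 1)).image b with hA
    have hbinj : ∀ x ∈ range (M + 1), ∀ y ∈ range (M + 1), b x = b y → x = y := by
      intro x hx y hy hxy
      have h1 : ((b x : ℕ) : ZMod p) = ((b y : ℕ) : ZMod p) := by rw [hxy]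
      rw [hbcast x, hbcast y] at h1
      have h2 : (g : ZMod p) ^ x = (g : ZMod p) ^ y := mul_right_cancel₀ hγinv0 h1
      exact hg.pow_inj (by have := Finset.mem_range.mp hx; omega)
        (by have := Finset.mem_range.mp hy; omega) h2
    have hAcard : A.card = M + 1 := by
      rw [hA, Finset.card_image_of_injOn fun x hx y hy => hbinj x hx y hy, Finset.card_range]
    have hAsub : A ⊆ Finset.Ico 1 p := by
      intro x hx
      rw [hA] at hx
      obtain ⟨i, _, rfl⟩ := Finset.mem_image.mp hx
      exact Finset.mem_Ico.mpr ⟨by have := hbne i; omega, hblt i⟩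
    have hnotpair : ∀ i ∈ range (M + 1), ∀ j ∈ range (M + 1), b i ≠ p - b j := by
      intro i hi j hj heq
      have hi' : i < M + 1 := Finset.mem_range.mp hi
      have hj' : j < M + 1 := Finset.mem_range.mp hj
      have hcast : ((b i : ℕ) : ZMod p) = ((p - b j : ℕ) : ZMod p) := by rw [heq]
      rw [hbcast i, Nat.cast_sub (hblt j).le, ZMod.natCast_self, hbcast j, zero_sub] at hcast
      have h1 : (g : ZMod p) ^ i = -((g : ZMod p) ^ j) :=
        mul_right_cancel₀ hγinv0 (by linear_combination hcast)
      have h2 : (g : ZMod p) ^ i = (g : ZMod p) ^ (j + (p - 1) / 2) := by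
        rw [pow_add, hneg, h1]
        ring
      have h3 := hg.pow_inj (by omega) (by omega : j + (p - 1) / 2 < p - 1) h2
      omega
    set A' : Finset ℕ := A.image (fun a => p - a) with hA'
    have hinj2 : ∀ x ∈ A, ∀ y ∈ A, p - x = p - y → x = y := by
      intro x hx y hy hxy
      have h1 := Finset.mem_Ico.mp (hAsub hx)
      have h2 := Finset.mem_Ico.mp (hAsub hy)
      omega
    have hA'sub : A' ⊆ Finset.Ico 1 p \ A := by
      intro x hx
      rw [hA'] at hx
      obtain ⟨a, ha, rfl⟩ := Finset.mem_image.mp hx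
      have h1 := Finset.mem_Ico.mp (hAsub ha)
      rw [Finset.mem_sdiff]
      constructor
      · exact Finset.mem_Ico.mpr ⟨by omega, by omega⟩
      · intro hmem
        rw [hA] at hmem ha
        obtain ⟨i, hi, hbi⟩ := Finset.mem_image.mp hmem
        obtain ⟨j, hj, hbj⟩ := Finset.mem_image.mp ha
        exact hnotpair i hi j hj (by rw [hbi, hbj])
    have hA'card : A'.card = M + 1 := by
      rw [hA', Finset.card_image_of_injOn fun x hx y hy => hinj2 x hx y hy, hAcard]
    have hsdcard : (Finset.Ico 1 p \ A).card = M + 1 := by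
      rw [Finset.card_sdiff_of_subset hAsub, Nat.card_Ico, hAcard]
      omega
    have hA'eq : A' = Finset.Ico 1 p \ A :=
      Finset.eq_of_subset_of_card_le hA'sub (by rw [hsdcard, hA'card])
    -- now compute T in ZMod p
    have hkodd : Odd (k - 1) := ⟨t - 1, by omega⟩
    have hTcast : ((T : ℤ) : ZMod p)
        = ∑ a ∈ range p, ((a : ℕ) : ZMod p) ^ (k - 1) * ((Q a : ℕ) : ZMod p) := by
      rw [hT]
      push_cast
      rfl
    have hstep1 : ∑ a ∈ range p, ((a : ℕ) : ZMod p) ^ (k - 1) * ((Q a : ℕ) : ZMod p)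
        = ∑ a ∈ Finset.Ico 1 p, ((a : ℕ) : ZMod p) ^ (k - 1) * ((Q a : ℕ) : ZMod p) := by
      symm
      apply Finset.sum_subset
      · intro x hx
        have := Finset.mem_Ico.mp hx
        exact Finset.mem_range.mpr (by omega)
      · intro x hx hnx
        have h1 := Finset.mem_range.mp hx
        have hx0 : x = 0 := by
          by_contra h
          exact hnx (Finset.mem_Ico.mpr ⟨by omega, h1⟩)
        rw [hx0]
        rw [Nat.cast_zero, zero_pow (by omega : k - 1 ≠ 0), zero_mul]
    have hstep2 : ∑ a ∈ Finset.Ico 1 p, ((a : ℕ) : ZMod p) ^ (k - 1) * ((Q a : ℕ) : ZMod p)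
        = ∑ a ∈ A, (((a : ℕ) : ZMod p) ^ (k - 1) * ((Q a : ℕ) : ZMod p)
            + ((p - a : ℕ) : ZMod p) ^ (k - 1) * ((Q (p - a) : ℕ) : ZMod p)) := by
      rw [Finset.sum_add_distrib]
      have h1 : ∑ a ∈ A, (((p - a : ℕ) : ZMod p) ^ (k - 1) * ((Q (p - a) : ℕ) : ZMod p))
          = ∑ x ∈ Finset.Ico 1 p \ A, (((x : ℕ) : ZMod p) ^ (k - 1) * ((Q x : ℕ) : ZMod p)) := by
        rw [← hA'eq, hA']
        rw [Finset.sum_image fun x hx y hy => hinj2 x hx y hy]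
      rw [h1, add_comm, Finset.sum_sdiff hAsub]
    have hstep3 : ∀ a ∈ A, ((a : ℕ) : ZMod p) ^ (k - 1) * ((Q a : ℕ) : ZMod p)
            + ((p - a : ℕ) : ZMod p) ^ (k - 1) * ((Q (p - a) : ℕ) : ZMod p)
        = ((a : ℕ) : ZMod p) ^ (k - 1) * (2 * ((Q a : ℕ) : ZMod p) - ((g : ZMod p) - 1)) := by
      intro a ha
      have hbounds := Finset.mem_Ico.mp (hAsub ha)
      have hcastpa : ((p - a : ℕ) : ZMod p) = -((a : ℕ) : ZMod p) := by
        rw [Nat.cast_sub (by omega : a ≤ p), ZMod.natCast_self, zero_sub]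
      have hQp := hQpair a (by omega) (by omega)
      have hQcast : ((Q (p - a) : ℕ) : ZMod p)
          = (g : ZMod p) - 1 - ((Q a : ℕ) : ZMod p) := by
        have := congrArg (fun n : ℕ => (n : ZMod p)) hQp
        push_cast at this
        linear_combination this
      rw [hcastpa, hQcast, Odd.neg_pow hkodd]
      ring
    have hstep4 : ∑ a ∈ A, ((a : ℕ) : ZMod p) ^ (k - 1)
          * (2 * ((Q a : ℕ) : ZMod p) - ((g : ZMod p) - 1))
        = ∑ i ∈ range (M + 1), ((g : ZMod p) ^ i * (ginv : ZMod p)) ^ (k - 1)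
            * (2 * ((Q (b i) : ℕ) : ZMod p) - ((g : ZMod p) - 1)) := by
      rw [hA, Finset.sum_image hbinj]
      exact Finset.sum_congr rfl fun i _ => by rw [hbcast i]
    -- put it together
    rw [hTcast, hstep1, hstep2, Finset.sum_congr rfl hstep3, hstep4, hV,
      Finset.mul_sum, ← Finset.sum_neg_distrib]
    refine Finset.sum_congr rfl fun i _ => ?_
    have hione : ((g : ZMod p) * (ginv : ZMod p)) ^ (k - 1) = 1 := by rw [hγinv, one_pow]
    have hexp : ((g : ZMod p) ^ i) ^ (k - 1) = (g : ZMod p) ^ ((k - 1) * i) := by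
      rw [← pow_mul, Nat.mul_comm]
    calc (g : ZMod p) ^ (k - 1) * (((g : ZMod p) ^ i * (ginv : ZMod p)) ^ (k - 1)
            * (2 * ((Q (b i) : ℕ) : ZMod p) - ((g : ZMod p) - 1)))
        = ((g : ZMod p) * (ginv : ZMod p)) ^ (k - 1) * (((g : ZMod p) ^ i) ^ (k - 1)
            * (2 * ((Q (b i) : ℕ) : ZMod p) - ((g : ZMod p) - 1))) := by
          rw [mul_pow, mul_pow]; ring
      _ = -((g : ZMod p) ^ ((k - 1) * i)
            * ((g : ZMod p) - 1 - 2 * ((Q (b i) : ℕ) : ZMod p))) := by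
          rw [hione, hexp]; ring
  -- final assembly
  rw [hbern]
  have hrhs : ∑ i ∈ Finset.range (M + 1),
      (g : ZMod p) ^ ((k - 1) * i) *
        ((((((g ^ i % p : ℕ) : ℚ) - g * ((g ^ i * ginv % p : ℕ) : ℚ)) / p
            + ((g : ℚ) - 1) / 2 : ℚ) : ZMod p)) = V / 2 := by
    rw [hV, Finset.sum_div]
    refine Finset.sum_congr rfl fun i _ => ?_
    rw [hcast_h i]
    push_cast
    ring
  rw [hrhs]
  have h2 : (2 : ZMod p) ≠ 0 := by
    intro h
    have := (ZMod.natCast_eq_zero_iff 2 p).mp (by exact_mod_cast h)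
    have := Nat.le_of_dvd (by norm_num) this
    omega
  have h1k : (1 : ZMod p) - (g : ZMod p) ^ k ≠ 0 := by
    intro h
    apply hgk
    have : (g : ZMod p) ^ k = 1 := by linear_combination -h
    exact this
  field_simp
  linear_combination hzmod - (k : ZMod p) * hpair
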